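/- Let X be a real normed space, Y a real Banach space, r, s, t positive integers, ε, δ ≥ 0, and p ∈ [0, 1). If f : X → Y satisfies f(0) = 0 and ‖r·f((s·x + t·y)/r) − s·f(x) − t·f(y)‖ ≤ ε + δ(‖x‖^p + ‖y‖^p) for all x, y ∈ X, then there exists a unique additive map T : X → Y such that ‖f(x) − T(x)‖ ≤ (3/r)ε + (1/r)·[(r/s)^p + (r/t)^p]·(2δ‖x‖^p)/(1 − 2^{p−1}) for all x ∈ X. -/

import Mathlib

open Filter Topology Finset

open Filter Topology Finset

lemma rpow_smul_norm' {X : Type*} [NormedAddCommGroup X] [NormedSpace ℝ X]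
    (c p : ℝ) (hc : 0 ≤ c) (x : X) : ‖c • x‖ ^ p = c ^ p * ‖x‖ ^ p := by
  rw [norm_smul, Real.norm_eq_abs, abs_of_nonneg hc, Real.mul_rpow hc (norm_nonneg x)]

lemma pow_rpow_comm' (n : ℕ) (p : ℝ) : ((2:ℝ)^n)^p = ((2:ℝ)^p)^n := by
  rw [← Real.rpow_natCast (2:ℝ) n, ← Real.rpow_natCast ((2:ℝ)^p) n,
    ← Real.rpow_mul (by norm_num), ← Real.rpow_mul (by norm_num), mul_comm]

lemma pow_smul_cast' {Z : Type*} [AddCommGroup Z] [Module ℝ Z] (n : ℕ) (z : Z) :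
    (2:ℝ)^n • z = (2^n : ℕ) • z := by
  rw [← Nat.cast_smul_eq_nsmul ℝ]
  norm_num

lemma hyers_aux {X Y : Type*} [NormedAddCommGroup X] [NormedSpace ℝ X]
    [NormedAddCommGroup Y] [NormedSpace ℝ Y] [CompleteSpace Y]
    (a b p : ℝ) (ha : 0 ≤ a) (hb : 0 ≤ b) (hp0 : 0 ≤ p) (hp1 : p < 1)
    (f : X → Y)
    (key : ∀ x : X, ‖f ((2:ℝ) • x) - (2:ℝ) • f x‖ ≤ a + b * ‖x‖ ^ p) :
    ∃ T : X → Y,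
      (∀ x, Tendsto (fun n : ℕ => ((2:ℝ)^n)⁻¹ • f ((2:ℝ)^n • x)) atTop (𝓝 (T x))) ∧
      (∀ x, ‖f x - T x‖ ≤ a + (b/2) * ‖x‖ ^ p / (1 - (2:ℝ) ^ (p-1))) := by
  set q : ℝ := (2:ℝ) ^ (p-1) with hq
  have hq0 : 0 < q := Real.rpow_pos_of_pos two_pos _
  have hq1 : q < 1 := Real.rpow_lt_one_of_one_lt_of_neg one_lt_two (by linarith)
  have hqe : q = (2:ℝ)^p / 2 := by
    rw [hq, Real.rpow_sub two_pos, Real.rpow_one]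
  set g : ℕ → X → Y := fun n x => ((2:ℝ)^n)⁻¹ • f ((2:ℝ)^n • x) with hg
  have step : ∀ (x : X) (n : ℕ),
      ‖g (n+1) x - g n x‖ ≤ a * (1/2)^(n+1) + (b/2 * ‖x‖^p) * q^n := by
    intro x n
    have h2n : (0:ℝ) < 2^(n+1) := by positivity
    have e2 : g (n+1) x - g n x
        = ((2:ℝ)^(n+1))⁻¹ • (f ((2:ℝ) • ((2:ℝ)^n • x)) - (2:ℝ) • f ((2:ℝ)^n • x)) := by
      rw [smul_sub]
      congr 1
      · simp only [hg]
        congr 2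
        rw [smul_smul, pow_succ, mul_comm]
      · simp only [hg, smul_smul]
        congr 1
        rw [pow_succ]
        field_simp
    rw [e2, norm_smul, Real.norm_eq_abs, abs_of_pos (by positivity)]
    have hb1 : ‖f ((2:ℝ) • ((2:ℝ)^n • x)) - (2:ℝ) • f ((2:ℝ)^n • x)‖
        ≤ a + b * (((2:ℝ)^p)^n * ‖x‖^p) := by
      have := key ((2:ℝ)^n • x)
      rwa [rpow_smul_norm' _ p (by positivity), pow_rpow_comm'] at this
    have h1 : ((2:ℝ)^(n+1))⁻¹ * ‖f ((2:ℝ) • ((2:ℝ)^n • x)) - (2:ℝ) • f ((2:ℝ)^n • x)‖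
        ≤ ((2:ℝ)^(n+1))⁻¹ * (a + b * (((2:ℝ)^p)^n * ‖x‖^p)) := by
      apply mul_le_mul_of_nonneg_left hb1 (by positivity)
    refine h1.trans (le_of_eq ?_)
    rw [hqe, div_pow]
    field_simp
    have h12 : ((1:ℝ)/2)^n * 2^n = 1 := by rw [← mul_pow]; norm_num
    linear_combination (-(b*((2:ℝ)^p)^n*‖x‖^p*2)) * h12
  have cauchy : ∀ x : X, CauchySeq (fun n => g n x) := by
    intro x
    set ρ : ℝ := max (1/2) q with hρdef
    have hρ1 : ρ < 1 := max_lt (by norm_num) hq1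
    have hρ0 : (0:ℝ) ≤ ρ := le_max_of_le_left (by norm_num)
    apply cauchySeq_of_le_geometric ρ (a/2 + b/2 * ‖x‖^p) hρ1
    intro n
    rw [dist_eq_norm, norm_sub_rev]
    refine (step x n).trans ?_
    have e1 : a * (1/2:ℝ)^(n+1) ≤ a/2 * ρ^n := by
      rw [pow_succ]
      have : (1/2:ℝ)^n ≤ ρ^n := pow_le_pow_left₀ (by norm_num) (le_max_left _ _) n
      nlinarith [pow_nonneg (show (0:ℝ) ≤ 1/2 by norm_num) n]
    have e2 : (b/2 * ‖x‖^p) * q^n ≤ (b/2 * ‖x‖^p) * ρ^n := by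
      apply mul_le_mul_of_nonneg_left (pow_le_pow_left₀ hq0.le (le_max_right _ _) n)
      positivity
    nlinarith
  have hlim : ∀ x : X, ∃ L : Y, Tendsto (fun n => g n x) atTop (𝓝 L) :=
    fun x => cauchySeq_tendsto_of_complete (cauchy x)
  choose T hT using hlim
  refine ⟨T, hT, ?_⟩
  intro x
  have g0 : g 0 x = f x := by simp [hg]
  have partial_bound : ∀ n : ℕ, dist (g 0 x) (g n x) ≤ a + (b/2 * ‖x‖^p) * (1-q)⁻¹ := by
    intro n
    refine (dist_le_range_sum_dist (fun n => g n x) n).trans ?_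
    have hsum : ∑ i ∈ range n, dist (g i x) (g (i+1) x)
        ≤ ∑ i ∈ range n, (a * (1/2)^(i+1) + (b/2 * ‖x‖^p) * q^i) := by
      apply Finset.sum_le_sum
      intro i _
      rw [dist_eq_norm, norm_sub_rev]
      exact step x i
    refine hsum.trans ?_
    rw [Finset.sum_add_distrib, ← Finset.mul_sum, ← Finset.mul_sum]
    have s1 : ∑ i ∈ range n, (1/2:ℝ)^(i+1) ≤ 1 := by
      have : ∑ i ∈ range n, (1/2:ℝ)^(i+1) = (1/2) * ∑ i ∈ range n, (1/2:ℝ)^i := by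
        rw [Finset.mul_sum]; congr 1; ext i; rw [pow_succ]; ring
      rw [this]
      have h2 : ∑ i ∈ range n, (1/2:ℝ)^i ≤ 2 := by
        have := Summable.sum_le_tsum (range n) (fun i _ => by positivity)
          (summable_geometric_of_lt_one (by norm_num : (0:ℝ) ≤ 1/2) (by norm_num))
        rwa [tsum_geometric_of_lt_one (by norm_num) (by norm_num), show ((1:ℝ)-1/2)⁻¹ = 2 by norm_num] at this
      linarith
    have s2 : ∑ i ∈ range n, q^i ≤ (1-q)⁻¹ := by
      have := Summable.sum_le_tsum (range n) (fun i _ => by positivity)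
        (summable_geometric_of_lt_one hq0.le hq1)
      rwa [tsum_geometric_of_lt_one hq0.le hq1] at this
    have hbx : (0:ℝ) ≤ b/2 * ‖x‖^p := by positivity
    nlinarith [mul_le_mul_of_nonneg_left s2 hbx, mul_le_mul_of_nonneg_left s1 ha]
  have hdist : Tendsto (fun n => dist (g 0 x) (g n x)) atTop (𝓝 (dist (g 0 x) (T x))) :=
    tendsto_const_nhds.dist (hT x)
  have := le_of_tendsto hdist (Eventually.of_forall partial_bound)
  rw [g0, dist_eq_norm] at this
  refine this.trans (le_of_eq ?_)
  rw [div_eq_mul_inv, div_eq_mul_inv]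

theorem stmt_2 {X Y : Type*} [NormedAddCommGroup X] [NormedSpace ℝ X]
    [NormedAddCommGroup Y] [NormedSpace ℝ Y] [CompleteSpace Y]
    (r s t : ℕ) (hr : 0 < r) (hs : 0 < s) (ht : 0 < t)
    (ε δ : ℝ) (hε : 0 ≤ ε) (hδ : 0 ≤ δ) (p : ℝ) (hp0 : 0 ≤ p) (hp1 : p < 1)
    (f : X → Y) (hf0 : f 0 = 0)
    (hineq : ∀ x y : X,
      ‖(r : ℝ) • f (((r : ℝ)⁻¹) • ((s : ℝ) • x + (t : ℝ) • y)) - (s : ℝ) • f x - (t : ℝ) • f y‖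
        ≤ ε + δ * (‖x‖ ^ p + ‖y‖ ^ p)) :
    ∃! T : X → Y, (∀ x y : X, T (x + y) = T x + T y) ∧
      ∀ x : X, ‖f x - T x‖ ≤ (3 / r : ℝ) * ε
        + (1 / r : ℝ) * (((r : ℝ) / s) ^ p + ((r : ℝ) / t) ^ p) *
          (2 * δ * ‖x‖ ^ p / (1 - (2 : ℝ) ^ (p - 1))) := by
  have hr' : (0:ℝ) < r := Nat.cast_pos.mpr hr
  have hs' : (0:ℝ) < s := Nat.cast_pos.mpr hs
  have ht' : (0:ℝ) < t := Nat.cast_pos.mpr ht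
  set q : ℝ := (2:ℝ) ^ (p-1) with hqdef
  have hq0 : 0 < q := Real.rpow_pos_of_pos two_pos _
  have hq1 : q < 1 := Real.rpow_lt_one_of_one_lt_of_neg one_lt_two (by linarith)
  set M : ℝ := ((r:ℝ)/s)^p + ((r:ℝ)/t)^p with hM
  have hM0 : 0 ≤ M := by positivity
  -- key single-variable inequality
  have key : ∀ u : X, ‖f ((2:ℝ) • u) - (2:ℝ) • f u‖ ≤ 3*ε/r + (3*δ*M/r) * ‖u‖^p := by
    intro u
    set u1 : X := ((r:ℝ)/s) • u with hu1
    set u2 : X := ((r:ℝ)/t) • u with hu2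
    have e1 : (s:ℝ) • u1 = (r:ℝ) • u := by
      rw [hu1, smul_smul]; congr 1; field_simp
    have e2 : (t:ℝ) • u2 = (r:ℝ) • u := by
      rw [hu2, smul_smul]; congr 1; field_simp
    have h1 := hineq u1 u2
    rw [e1, e2, ← add_smul, smul_smul, show (r:ℝ)⁻¹ * ((r:ℝ)+(r:ℝ)) = 2 by field_simp; ring] at h1
    have h2 := hineq u1 0
    rw [smul_zero, add_zero, hf0, smul_zero, sub_zero, e1, smul_smul,
      show (r:ℝ)⁻¹ * (r:ℝ) = 1 by field_simp, one_smul] at h2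
    have h3 := hineq 0 u2
    rw [smul_zero, zero_add, hf0, smul_zero, e2, smul_smul,
      show (r:ℝ)⁻¹ * (r:ℝ) = 1 by field_simp, one_smul] at h3
    have hn1 : ‖u1‖^p = ((r:ℝ)/s)^p * ‖u‖^p := rpow_smul_norm' _ p (by positivity) u
    have hn2 : ‖u2‖^p = ((r:ℝ)/t)^p * ‖u‖^p := rpow_smul_norm' _ p (by positivity) u
    have hz1 : ‖(0:X)‖^p ≤ ((r:ℝ)/s)^p * ‖u‖^p := by
      rw [norm_zero, ← Real.mul_rpow (by positivity) (norm_nonneg u)]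
      exact Real.rpow_le_rpow le_rfl (by positivity) hp0
    have hz2 : ‖(0:X)‖^p ≤ ((r:ℝ)/t)^p * ‖u‖^p := by
      rw [norm_zero, ← Real.mul_rpow (by positivity) (norm_nonneg u)]
      exact Real.rpow_le_rpow le_rfl (by positivity) hp0
    rw [sub_zero] at h3
    -- combine via triangle inequality
    have decomp : (r:ℝ) • (f ((2:ℝ) • u) - (2:ℝ) • f u)
        = ((r:ℝ) • f ((2:ℝ) • u) - (s:ℝ) • f u1 - (t:ℝ) • f u2)
          - ((r:ℝ) • f u - (s:ℝ) • f u1) - ((r:ℝ) • f u - (t:ℝ) • f u2) := by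
      module
    have tri : ‖(r:ℝ) • (f ((2:ℝ) • u) - (2:ℝ) • f u)‖
        ≤ ‖(r:ℝ) • f ((2:ℝ) • u) - (s:ℝ) • f u1 - (t:ℝ) • f u2‖
          + ‖(r:ℝ) • f u - (s:ℝ) • f u1‖ + ‖(r:ℝ) • f u - (t:ℝ) • f u2‖ := by
      rw [decomp]
      calc ‖_ - _ - ((r:ℝ) • f u - (t:ℝ) • f u2)‖
          ≤ ‖((r:ℝ) • f ((2:ℝ) • u) - (s:ℝ) • f u1 - (t:ℝ) • f u2) - ((r:ℝ) • f u - (s:ℝ) • f u1)‖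
            + ‖(r:ℝ) • f u - (t:ℝ) • f u2‖ := norm_sub_le _ _
        _ ≤ _ := by
            have := norm_sub_le ((r:ℝ) • f ((2:ℝ) • u) - (s:ℝ) • f u1 - (t:ℝ) • f u2)
              ((r:ℝ) • f u - (s:ℝ) • f u1)
            linarith
    have hA : ‖(r:ℝ) • (f ((2:ℝ) • u) - (2:ℝ) • f u)‖ = (r:ℝ) * ‖f ((2:ℝ) • u) - (2:ℝ) • f u‖ := by
      rw [norm_smul, Real.norm_eq_abs, abs_of_pos hr']
    have hd1 := mul_le_mul_of_nonneg_left hz1 hδ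
    have hd2 := mul_le_mul_of_nonneg_left hz2 hδ
    have hnorm : (r:ℝ) * ‖f ((2:ℝ) • u) - (2:ℝ) • f u‖ ≤ 3*ε + 3*δ*M*‖u‖^p := by
      rw [← hA]
      rw [hn1, hn2] at h1; rw [hn1] at h2; rw [hn2] at h3
      have hMexp : 3*δ*M*‖u‖^p = 3*δ*(((r:ℝ)/s)^p * ‖u‖^p) + 3*δ*(((r:ℝ)/t)^p * ‖u‖^p) := by
        rw [hM]; ring
      rw [hMexp]
      linarith [tri, h1, h2, h3, hd1, hd2]
    have := (le_div_iff₀ hr').mpr (by rw [mul_comm]; linarith : ‖f ((2:ℝ) • u) - (2:ℝ) • f u‖ * r ≤ 3*ε + 3*δ*M*‖u‖^p)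
    refine this.trans (le_of_eq (by ring))
  
  have ha : (0:ℝ) ≤ 3*ε/r := by positivity
  have hb : (0:ℝ) ≤ 3*δ*M/r := by positivity
  obtain ⟨T, hT, hTbd⟩ := hyers_aux (3*ε/r) (3*δ*M/r) p ha hb hp0 hp1 f key
  have h1q : (0:ℝ) < 1 - q := by linarith
  -- the claimed bound for T
  have bound : ∀ x : X, ‖f x - T x‖ ≤ (3 / r : ℝ) * ε
      + (1 / r : ℝ) * M * (2 * δ * ‖x‖ ^ p / (1 - q)) := by
    intro x
    refine (hTbd x).trans ?_
    have hxp : (0:ℝ) ≤ ‖x‖^p := Real.rpow_nonneg (norm_nonneg x) p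
    have e1 : 3*ε/(r:ℝ) = (3/r:ℝ)*ε := by ring
    rw [e1]
    have e2 : (3*δ*M/(r:ℝ)/2) * ‖x‖^p / (1-q) = ((3/2) * (δ*M*‖x‖^p/r)) / (1-q) := by ring
    have e3 : (1/(r:ℝ)) * M * (2*δ*‖x‖^p/(1-q)) = (2 * (δ*M*‖x‖^p/r)) / (1-q) := by ring
    have hc : (0:ℝ) ≤ δ*M*‖x‖^p/r := by positivity
    have : (3*δ*M/(r:ℝ)/2) * ‖x‖^p / (1-q) ≤ (1/(r:ℝ)) * M * (2*δ*‖x‖^p/(1-q)) := by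
      rw [e2, e3]
      exact (div_le_div_iff_of_pos_right h1q).mpr (by linarith)
    linarith
  -- exact functional equation for T
  have hTeq : ∀ u v : X, (r:ℝ) • T ((r:ℝ)⁻¹ • ((s:ℝ)•u + (t:ℝ)•v))
      = (s:ℝ)•T u + (t:ℝ)•T v := by
    intro u v
    set w : X := (r:ℝ)⁻¹ • ((s:ℝ)•u + (t:ℝ)•v) with hw
    have harg : ∀ n : ℕ, (2:ℝ)^n • w = (r:ℝ)⁻¹ • ((s:ℝ)•((2:ℝ)^n•u) + (t:ℝ)•((2:ℝ)^n•v)) := by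
      intro n
      rw [hw]
      module
    have hlim : Tendsto (fun n : ℕ =>
        (r:ℝ) • (((2:ℝ)^n)⁻¹ • f ((2:ℝ)^n • w)) - (s:ℝ) • (((2:ℝ)^n)⁻¹ • f ((2:ℝ)^n • u))
          - (t:ℝ) • (((2:ℝ)^n)⁻¹ • f ((2:ℝ)^n • v))) atTop
        (𝓝 ((r:ℝ) • T w - (s:ℝ) • T u - (t:ℝ) • T v)) :=
      (((hT w).const_smul (r:ℝ)).sub ((hT u).const_smul (s:ℝ))).sub ((hT v).const_smul (t:ℝ))
    have hzero : Tendsto (fun n : ℕ =>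
        (r:ℝ) • (((2:ℝ)^n)⁻¹ • f ((2:ℝ)^n • w)) - (s:ℝ) • (((2:ℝ)^n)⁻¹ • f ((2:ℝ)^n • u))
          - (t:ℝ) • (((2:ℝ)^n)⁻¹ • f ((2:ℝ)^n • v))) atTop (𝓝 0) := by
      apply squeeze_zero_norm (a := fun n : ℕ => ε * (1/2)^n + δ * (‖u‖^p + ‖v‖^p) * q^n)
      · intro n
        have e : (r:ℝ) • (((2:ℝ)^n)⁻¹ • f ((2:ℝ)^n • w)) - (s:ℝ) • (((2:ℝ)^n)⁻¹ • f ((2:ℝ)^n • u))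
              - (t:ℝ) • (((2:ℝ)^n)⁻¹ • f ((2:ℝ)^n • v))
            = ((2:ℝ)^n)⁻¹ • ((r:ℝ) • f ((2:ℝ)^n • w) - (s:ℝ) • f ((2:ℝ)^n • u)
              - (t:ℝ) • f ((2:ℝ)^n • v)) := by
          module
        rw [e, norm_smul, Real.norm_eq_abs, abs_of_pos (by positivity)]
        have hb := hineq ((2:ℝ)^n • u) ((2:ℝ)^n • v)
        rw [← harg n] at hb
        rw [rpow_smul_norm' _ p (by positivity) u, rpow_smul_norm' _ p (by positivity) v,
          pow_rpow_comm'] at hb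
        have h2n : (0:ℝ) < 2^n := by positivity
        calc ((2:ℝ)^n)⁻¹ * ‖(r:ℝ) • f ((2:ℝ)^n • w) - (s:ℝ) • f ((2:ℝ)^n • u) - (t:ℝ) • f ((2:ℝ)^n • v)‖
            ≤ ((2:ℝ)^n)⁻¹ * (ε + δ * (((2:ℝ)^p)^n * ‖u‖^p + ((2:ℝ)^p)^n * ‖v‖^p)) :=
              mul_le_mul_of_nonneg_left hb (by positivity)
          _ = ε * (1/2)^n + δ * (‖u‖^p + ‖v‖^p) * q^n := by
              rw [show q = (2:ℝ)^p/2 by rw [hqdef, Real.rpow_sub two_pos, Real.rpow_one], div_pow]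
              field_simp
              have h12 : ((1:ℝ)/2)^n * 2^n = 1 := by rw [← mul_pow]; norm_num
              linear_combination (-(δ*((2:ℝ)^p)^n*‖u‖^p + δ*((2:ℝ)^p)^n*‖v‖^p)) * h12
      · have l1 : Tendsto (fun n : ℕ => ε * (1/2:ℝ)^n) atTop (𝓝 (ε * 0)) :=
          (tendsto_pow_atTop_nhds_zero_of_lt_one (by norm_num) (by norm_num)).const_mul ε
        have l2 : Tendsto (fun n : ℕ => δ * (‖u‖^p + ‖v‖^p) * q^n) atTop (𝓝 (δ * (‖u‖^p + ‖v‖^p) * 0)) :=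
          (tendsto_pow_atTop_nhds_zero_of_lt_one hq0.le hq1).const_mul _
        simpa using l1.add l2
    have h0 := tendsto_nhds_unique hlim hzero
    have h : (r:ℝ) • T w - ((s:ℝ) • T u + (t:ℝ) • T v) = 0 := by rw [← sub_sub]; exact h0
    exact sub_eq_zero.mp h
  -- additivity of T
  have hrne : (r:ℝ) ≠ 0 := hr'.ne'
  have hT0 : T 0 = 0 := by
    have h0 : Tendsto (fun n : ℕ => ((2:ℝ)^n)⁻¹ • f ((2:ℝ)^n • (0:X))) atTop (𝓝 0) := by
      simp only [smul_zero, hf0]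
      exact tendsto_const_nhds
    exact tendsto_nhds_unique (hT 0) h0
  have hscale_s : ∀ c : X, (s:ℝ) • T (((r:ℝ)/s) • c) = (r:ℝ) • T c := by
    intro c
    have harg : (r:ℝ)⁻¹ • ((s:ℝ) • (((r:ℝ)/s) • c) + (t:ℝ) • (0:X)) = c := by
      rw [smul_zero, add_zero, smul_smul, smul_smul,
        show (r:ℝ)⁻¹ * (s:ℝ) * ((r:ℝ)/s) = 1 by field_simp, one_smul]
    have h := hTeq (((r:ℝ)/s) • c) 0
    rw [harg, hT0, smul_zero, add_zero] at h
    exact h.symm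
  have hscale_t : ∀ c : X, (t:ℝ) • T (((r:ℝ)/t) • c) = (r:ℝ) • T c := by
    intro c
    have harg : (r:ℝ)⁻¹ • ((s:ℝ) • (0:X) + (t:ℝ) • (((r:ℝ)/t) • c)) = c := by
      rw [smul_zero, zero_add, smul_smul, smul_smul,
        show (r:ℝ)⁻¹ * (t:ℝ) * ((r:ℝ)/t) = 1 by field_simp, one_smul]
    have h := hTeq 0 (((r:ℝ)/t) • c)
    rw [harg, hT0, smul_zero, zero_add] at h
    exact h.symm
  have Tadd : ∀ x y : X, T (x + y) = T x + T y := by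
    intro x y
    have harg : (r:ℝ)⁻¹ • ((s:ℝ) • (((r:ℝ)/s) • x) + (t:ℝ) • (((r:ℝ)/t) • y)) = x + y := by
      rw [smul_smul, smul_smul, show (s:ℝ) * ((r:ℝ)/s) = (r:ℝ) by field_simp,
        show (t:ℝ) * ((r:ℝ)/t) = (r:ℝ) by field_simp, smul_add, smul_smul, smul_smul,
        show (r:ℝ)⁻¹ * (r:ℝ) = 1 by field_simp, one_smul, one_smul]
    have h := hTeq (((r:ℝ)/s) • x) (((r:ℝ)/t) • y)
    rw [harg, hscale_s, hscale_t, ← smul_add] at h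
    exact smul_right_injective Y hrne h
  refine ⟨T, ⟨Tadd, bound⟩, ?_⟩
  rintro T' ⟨T'add, T'bd⟩
  funext x
  have hT'0 : T' 0 = 0 := by
    have := T'add 0 0
    rw [add_zero] at this
    exact left_eq_add.mp this
  have hT'n : ∀ (n : ℕ) (z : X), T' (n • z) = n • T' z := by
    intro n
    induction n with
    | zero => intro z; simp [hT'0]
    | succ k ih => intro z; rw [succ_nsmul, T'add, ih, succ_nsmul]
  have hTn : ∀ (n : ℕ) (z : X), T (n • z) = n • T z := by
    intro n
    induction n with
    | zero => intro z; simp [hT0]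
    | succ k ih => intro z; rw [succ_nsmul, Tadd, ih, succ_nsmul]
  set A : ℝ := (3 / r : ℝ) * ε with hA
  set B : ℝ := (1 / r : ℝ) * M * (2 * δ / (1 - q)) with hB
  have hbd' : ∀ z : X, ‖f z - T z‖ ≤ A + B * ‖z‖^p := by
    intro z
    refine (bound z).trans (le_of_eq ?_)
    rw [hA, hB]; ring
  have hbd'' : ∀ z : X, ‖f z - T' z‖ ≤ A + B * ‖z‖^p := by
    intro z
    refine (T'bd z).trans (le_of_eq ?_)
    rw [hA, hB]; ring
  have hdiff : ∀ n : ℕ, ‖T' x - T x‖ ≤ 2*A*(1/2)^n + 2*B*‖x‖^p * q^n := by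
    intro n
    have h2n : (0:ℝ) < 2^n := by positivity
    have e : T' x - T x = ((2:ℝ)^n)⁻¹ • (T' ((2:ℝ)^n • x) - T ((2:ℝ)^n • x)) := by
      rw [pow_smul_cast', hT'n, hTn, ← pow_smul_cast', ← pow_smul_cast', smul_sub,
        smul_smul, smul_smul, show ((2:ℝ)^n)⁻¹ * (2:ℝ)^n = 1 by field_simp,
        one_smul, one_smul]
    rw [e, norm_smul, Real.norm_eq_abs, abs_of_pos (by positivity)]
    set z : X := (2:ℝ)^n • x with hz
    have tri : ‖T' z - T z‖ ≤ ‖f z - T' z‖ + ‖f z - T z‖ := by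
      have h1 : T' z - T z = (f z - T z) - (f z - T' z) := by abel
      rw [h1]
      have := norm_sub_le (f z - T z) (f z - T' z)
      linarith
    have hzn : ‖z‖^p = ((2:ℝ)^p)^n * ‖x‖^p := by
      rw [hz, rpow_smul_norm' _ p (by positivity), pow_rpow_comm']
    have b1 := hbd' z
    have b2 := hbd'' z
    rw [hzn] at b1 b2
    have hstep : ‖T' z - T z‖ ≤ 2*A + 2*B*(((2:ℝ)^p)^n * ‖x‖^p) := by linarith
    calc ((2:ℝ)^n)⁻¹ * ‖T' z - T z‖
        ≤ ((2:ℝ)^n)⁻¹ * (2*A + 2*B*(((2:ℝ)^p)^n * ‖x‖^p)) :=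
          mul_le_mul_of_nonneg_left hstep (by positivity)
      _ = 2*A*(1/2)^n + 2*B*‖x‖^p * q^n := by
          rw [show q = (2:ℝ)^p/2 by rw [hqdef, Real.rpow_sub two_pos, Real.rpow_one], div_pow]
          field_simp
          have h12 : ((1:ℝ)/2)^n * 2^n = 1 := by rw [← mul_pow]; norm_num
          linear_combination (-(B*((2:ℝ)^p)^n*‖x‖^p)) * h12
  have htend : Tendsto (fun n : ℕ => 2*A*(1/2:ℝ)^n + 2*B*‖x‖^p * q^n) atTop (𝓝 0) := by
    have l1 : Tendsto (fun n : ℕ => 2*A*(1/2:ℝ)^n) atTop (𝓝 (2*A*0)) :=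
      (tendsto_pow_atTop_nhds_zero_of_lt_one (by norm_num) (by norm_num)).const_mul _
    have l2 : Tendsto (fun n : ℕ => 2*B*‖x‖^p*q^n) atTop (𝓝 (2*B*‖x‖^p*0)) :=
      (tendsto_pow_atTop_nhds_zero_of_lt_one hq0.le hq1).const_mul _
    simpa using l1.add l2
  have : ‖T' x - T x‖ ≤ 0 := ge_of_tendsto htend (Eventually.of_forall hdiff)
  have := norm_le_zero_iff.mp this
  exact sub_eq_zero.mp this
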